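/- Let W ⊆ GL(h) be an irreducible complex reflection group with dim h = n, and let {s₁,…,s_k} be a conjugacy class of complex reflections in W whose nontrivial eigenvalue is ζ. Then the alternating form Ω = Σᵢ ω_{sᵢ} on h ⊕ h* equals (k/n)·(1−ζ)⁻¹(1−ζ⁻¹)⁻¹(2−ζ−ζ⁻¹)·ω, where ω is the standard symplectic form on h ⊕ h*. -/
import Mathlib

section aux
variable {R : Type*} [CommRing R] {M : Type*} [AddCommGroup M] [Module R M]
  {M₂ : Type*} [AddCommGroup M₂] [Module R M₂]
  {N : Type*} [AddCommGroup N] [Module R N]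
  {N₂ : Type*} [AddCommGroup N₂] [Module R N₂]

lemma idem_fix {p : M →ₗ[R] M} (hp : p ∘ₗ p = p) {x : M} (hx : x ∈ LinearMap.range p) :
    p x = x := by
  obtain ⟨y, rfl⟩ := hx
  conv_rhs => rw [← hp]
  rfl

lemma proj_unique {p q : M →ₗ[R] M} (hp : p ∘ₗ p = p) (hq : q ∘ₗ q = q)
    (hr : LinearMap.range p = LinearMap.range q) (hk : LinearMap.ker p = LinearMap.ker q) :
    p = q := by
  ext x
  have h1 : q (p x) = p x := idem_fix hq (hr ▸ LinearMap.mem_range_self p x)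
  have h2 : x - p x ∈ LinearMap.ker q := by
    rw [← hk, LinearMap.mem_ker, map_sub, ← LinearMap.comp_apply, hp, sub_self]
  rw [LinearMap.mem_ker, map_sub, h1, sub_eq_zero] at h2
  exact h2.symm

lemma range_conj {u u' f : M →ₗ[R] M} (h1 : u ∘ₗ u' = LinearMap.id)
    (h2 : u' ∘ₗ u = LinearMap.id) :
    LinearMap.range (u ∘ₗ f ∘ₗ u') = Submodule.map u (LinearMap.range f) := by
  have hsurj : LinearMap.range u' = ⊤ := by
    rw [LinearMap.range_eq_top]
    exact fun x => ⟨u x, LinearMap.ext_iff.mp h2 x⟩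
  rw [← LinearMap.comp_assoc] at *
  rw [LinearMap.range_comp_of_range_eq_top _ hsurj, LinearMap.range_comp]

lemma ker_conj {u u' f : M →ₗ[R] M} (h1 : u ∘ₗ u' = LinearMap.id)
    (h2 : u' ∘ₗ u = LinearMap.id) :
    LinearMap.ker (u ∘ₗ f ∘ₗ u') = Submodule.map u (LinearMap.ker f) := by
  ext x
  simp only [LinearMap.mem_ker, LinearMap.comp_apply, Submodule.mem_map]
  have h2' : ∀ z, u' (u z) = z := fun z => LinearMap.ext_iff.mp h2 z
  have h1' : ∀ z, u (u' z) = z := fun z => LinearMap.ext_iff.mp h1 z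
  constructor
  · intro hx
    refine ⟨u' x, ?_, h1' x⟩
    have : u' (u (f (u' x))) = u' 0 := by rw [hx]
    rwa [h2', map_zero, ← LinearMap.mem_ker] at this
  · rintro ⟨y, hy, rfl⟩
    rw [h2' y, hy, map_zero]

lemma range_prodMap' (f : M →ₗ[R] M₂) (g : N →ₗ[R] N₂) :
    LinearMap.range (LinearMap.prodMap f g) =
      (LinearMap.range f).prod (LinearMap.range g) := by
  ext ⟨x, y⟩
  simp only [LinearMap.mem_range, Submodule.mem_prod, LinearMap.prodMap_apply, Prod.ext_iff]
  constructor
  · rintro ⟨⟨a, b⟩, h1, h2⟩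
    exact ⟨⟨a, h1⟩, ⟨b, h2⟩⟩
  · rintro ⟨⟨a, h1⟩, ⟨b, h2⟩⟩
    exact ⟨⟨a, b⟩, h1, h2⟩

end aux
set_option maxHeartbeats 1000000 in
/-- Let `W ⊆ GL(h)` be an irreducible complex reflection group (given by a representation
`ρ` on the `n`-dimensional space `h`, with dual representation irreducible so that Schur's
lemma applies, and such that every `W`-invariant alternating bilinear form on `h ⊕ h*` is a
multiple of the standard symplectic form `ω`, i.e. `dim (∧²(h ⊕ h*))^W = 1`), and let
`{s₁, …, s_k}` be a conjugacy class of complex reflections in `W` with nontrivial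
eigenvalue `ζ`. With `π_i` the projection onto `Im(1 − s_i)` along `Ker(1 − s_i)` on
`h ⊕ h*` and `ω_{s_i} = ω ∘ (π_i × π_i)`, the alternating form `Ω = Σ_i ω_{s_i}` equals
`(k/n)(1−ζ)⁻¹(1−ζ⁻¹)⁻¹(2−ζ−ζ⁻¹)·ω`. -/
theorem stmt1 (W : Type*) [Group W]
    (h : Type*) [AddCommGroup h] [Module ℂ h] [FiniteDimensional ℂ h]
    (n : ℕ) (hn : 0 < n) (hdim : Module.finrank ℂ h = n)
    (ρ : Representation ℂ W h)
    -- Schur's lemma for the (irreducible) dual reflection representation h*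
    (hSchur : ∀ φ : Module.Dual ℂ h →ₗ[ℂ] Module.Dual ℂ h,
      (∀ w, φ ∘ₗ ρ.dual w = ρ.dual w ∘ₗ φ) → ∃ c : ℂ, φ = c • LinearMap.id)
    -- the diagonal action on h ⊕ h*
    (σ : W → (h × Module.Dual ℂ h) →ₗ[ℂ] (h × Module.Dual ℂ h))
    (hσ : ∀ w, σ w = LinearMap.prodMap (ρ w) (ρ.dual w))
    -- the standard symplectic form
    (ω : (h × Module.Dual ℂ h) → (h × Module.Dual ℂ h) → ℂ)
    (hω : ∀ x y, ω x y = x.2 y.1 - y.2 x.1)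
    -- the conjugacy class of reflections s₁, …, s_k with nontrivial eigenvalue ζ
    (k : ℕ) (hk : 0 < k) (s : Fin k → W)
    (hconj : ∀ g : W, ∃ e : Equiv.Perm (Fin k), ∀ i, g * s i * g⁻¹ = s (e i))
    (ζ : ℂ) (hζ1 : ζ ≠ 1) (hζ0 : ζ ≠ 0)
    (hrefl : ∀ i, Module.finrank ℂ (LinearMap.ker (ρ (s i) - LinearMap.id)) = n - 1)
    (heig : ∀ i, ∃ v : h, v ≠ 0 ∧ ρ (s i) v = ζ • v)
    -- the projections π_i onto Im(1 − s_i) along Ker(1 − s_i) in h ⊕ h*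
    (π : Fin k → ((h × Module.Dual ℂ h) →ₗ[ℂ] (h × Module.Dual ℂ h)))
    (hπ : ∀ i, π i ∘ₗ π i = π i ∧
      LinearMap.range (π i) = LinearMap.range (LinearMap.id - σ (s i)) ∧
      LinearMap.ker (π i) = LinearMap.ker (LinearMap.id - σ (s i)))
    -- dim (∧²(h ⊕ h*))^W = 1: every invariant alternating bilinear form is a multiple of ω
    (huniq : ∀ Ω : (h × Module.Dual ℂ h) →ₗ[ℂ] (h × Module.Dual ℂ h) →ₗ[ℂ] ℂ,
      (∀ x, Ω x x = 0) → (∀ (w : W) x y, Ω (σ w x) (σ w y) = Ω x y) →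
      ∃ c : ℂ, ∀ x y, Ω x y = c * ω x y) :
    ∀ x y, (∑ i, ω (π i x) (π i y)) =
      ((k : ℂ) / n) * (1 - ζ)⁻¹ * (1 - ζ⁻¹)⁻¹ * (2 - ζ - ζ⁻¹) * ω x y := by
  classical
  -- basic representation facts
  have hinv : ∀ (g : W) (x : h), ρ g (ρ g⁻¹ x) = x := by
    intro g x
    rw [← Module.End.mul_apply, ← map_mul, mul_inv_cancel, map_one, Module.End.one_apply]
  have hinv' : ∀ (g : W) (x : h), ρ g⁻¹ (ρ g x) = x := by
    intro g x
    rw [← Module.End.mul_apply, ← map_mul, inv_mul_cancel, map_one, Module.End.one_apply]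
  set a : Fin k → (h →ₗ[ℂ] h) := fun i => LinearMap.id - ρ (s i) with ha
  set b : Fin k → ((Module.Dual ℂ h) →ₗ[ℂ] (Module.Dual ℂ h)) := fun i => LinearMap.id - ρ.dual (s i) with hb
  have hF : ∀ i, (LinearMap.id - σ (s i)) = LinearMap.prodMap (a i) (b i) := by
    intro i
    rw [hσ]
    apply LinearMap.ext
    rintro ⟨x1, x2⟩
    simp [ha, hb, Prod.ext_iff]
  have hidem : ∀ i, π i ∘ₗ π i = π i := fun i => (hπ i).1
  have hrange : ∀ i, LinearMap.range (π i)
      = (LinearMap.range (a i)).prod (LinearMap.range (b i)) := by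
    intro i; rw [(hπ i).2.1, hF, range_prodMap']
  have hker : ∀ i, LinearMap.ker (π i)
      = (LinearMap.ker (a i)).prod (LinearMap.ker (b i)) := by
    intro i; rw [(hπ i).2.2, hF, LinearMap.ker_prodMap]
  have hfix : ∀ i z, z ∈ LinearMap.range (π i) → π i z = z := fun i z hz =>
    idem_fix (hidem i) hz
  have hzero : ∀ i z, z ∈ LinearMap.range (π i) → z ∈ LinearMap.ker (π i) → z = 0 := by
    intro i z h1 h2
    rw [LinearMap.mem_ker] at h2
    rw [← hfix i z h1, h2]
  -- the component projections
  set P : Fin k → (h →ₗ[ℂ] h) :=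
    fun i => LinearMap.fst ℂ h (Module.Dual ℂ h) ∘ₗ π i ∘ₗ LinearMap.inl ℂ h (Module.Dual ℂ h) with hP
  set Q : Fin k → ((Module.Dual ℂ h) →ₗ[ℂ] (Module.Dual ℂ h)) :=
    fun i => LinearMap.snd ℂ h (Module.Dual ℂ h) ∘ₗ π i ∘ₗ LinearMap.inr ℂ h (Module.Dual ℂ h) with hQ
  have hPpt : ∀ i u, π i (u, 0) = (P i u, 0) := by
    intro i u
    have hzr : π i (u, 0) ∈ LinearMap.range (π i) := LinearMap.mem_range_self _ _
    have hk2 : ((u, (0 : Module.Dual ℂ h)) - π i (u, 0)) ∈ LinearMap.ker (π i) := by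
      rw [LinearMap.mem_ker, map_sub, hfix i _ hzr, sub_self]
    have h2a : (π i (u, 0)).2 ∈ LinearMap.range (b i) :=
      (Submodule.mem_prod.mp ((hrange i) ▸ hzr)).2
    have h2b : (π i (u, 0)).2 ∈ LinearMap.ker (b i) := by
      have := (Submodule.mem_prod.mp ((hker i) ▸ hk2)).2
      have : -(π i (u, 0)).2 ∈ LinearMap.ker (b i) := by simpa using this
      simpa using (LinearMap.ker (b i)).neg_mem this
    have hmem1 : ((0 : h), (π i (u, 0)).2) ∈ LinearMap.range (π i) := by
      rw [hrange i]; exact Submodule.mem_prod.mpr ⟨Submodule.zero_mem _, h2a⟩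
    have hmem2 : ((0 : h), (π i (u, 0)).2) ∈ LinearMap.ker (π i) := by
      rw [hker i]; exact Submodule.mem_prod.mpr ⟨Submodule.zero_mem _, h2b⟩
    have h0 := hzero i _ hmem1 hmem2
    have hsnd : (π i (u, 0)).2 = 0 := congrArg Prod.snd h0
    exact Prod.ext rfl hsnd
  have hQpt : ∀ i f, π i (0, f) = (0, Q i f) := by
    intro i f
    have hzr : π i (0, f) ∈ LinearMap.range (π i) := LinearMap.mem_range_self _ _
    have hk2 : (((0 : h), f) - π i (0, f)) ∈ LinearMap.ker (π i) := by
      rw [LinearMap.mem_ker, map_sub, hfix i _ hzr, sub_self]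
    have h2a : (π i (0, f)).1 ∈ LinearMap.range (a i) :=
      (Submodule.mem_prod.mp ((hrange i) ▸ hzr)).1
    have h2b : (π i (0, f)).1 ∈ LinearMap.ker (a i) := by
      have := (Submodule.mem_prod.mp ((hker i) ▸ hk2)).1
      have : -(π i (0, f)).1 ∈ LinearMap.ker (a i) := by simpa using this
      simpa using (LinearMap.ker (a i)).neg_mem this
    have hmem1 : ((π i (0, f)).1, (0 : Module.Dual ℂ h)) ∈ LinearMap.range (π i) := by
      rw [hrange i]; exact Submodule.mem_prod.mpr ⟨h2a, Submodule.zero_mem _⟩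
    have hmem2 : ((π i (0, f)).1, (0 : Module.Dual ℂ h)) ∈ LinearMap.ker (π i) := by
      rw [hker i]; exact Submodule.mem_prod.mpr ⟨h2b, Submodule.zero_mem _⟩
    have h0 := hzero i _ hmem1 hmem2
    have hfst : (π i (0, f)).1 = 0 := congrArg Prod.fst h0
    exact Prod.ext hfst rfl
  have hsplit : ∀ i x, π i x = (P i x.1, Q i x.2) := by
    intro i x
    have : (x : h × (Module.Dual ℂ h)) = (x.1, 0) + (0, x.2) := by simp
    rw [this, map_add, hPpt, hQpt]
    simp
  -- π i = prodMap (P i) (Q i)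
  have hπprod : ∀ i, π i = LinearMap.prodMap (P i) (Q i) := by
    intro i; apply LinearMap.ext; intro x; rw [hsplit i x]; rfl
  have hPidem : ∀ i, P i ∘ₗ P i = P i := by
    intro i
    apply LinearMap.ext; intro u
    have h1 : π i (P i u, 0) = π i (u, 0) := by
      rw [← hPpt i u, ← LinearMap.comp_apply, hidem]
    have := congrArg Prod.fst h1
    simpa [hPpt] using this
  have hQidem : ∀ i, Q i ∘ₗ Q i = Q i := by
    intro i
    apply LinearMap.ext; intro f
    have h1 : π i (0, Q i f) = π i (0, f) := by
      rw [← hQpt i f, ← LinearMap.comp_apply, hidem]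
    have := congrArg Prod.snd h1
    simpa [hQpt] using this
  have hPrange : ∀ i, LinearMap.range (P i) = LinearMap.range (a i) := by
    intro i
    ext u
    constructor
    · rintro ⟨u', rfl⟩
      have : π i (u', 0) ∈ LinearMap.range (π i) := LinearMap.mem_range_self _ _
      rw [hPpt i u', hrange i] at this
      exact (Submodule.mem_prod.mp this).1
    · intro hu
      have : (u, (0 : Module.Dual ℂ h)) ∈ LinearMap.range (π i) := by
        rw [hrange i]; exact Submodule.mem_prod.mpr ⟨hu, Submodule.zero_mem _⟩
      obtain ⟨z, hz⟩ := this
      refine ⟨z.1, ?_⟩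
      have := congrArg Prod.fst hz
      rwa [hsplit i z] at this
  have hQrange : ∀ i, LinearMap.range (Q i) = LinearMap.range (b i) := by
    intro i
    ext f
    constructor
    · rintro ⟨f', rfl⟩
      have : π i (0, f') ∈ LinearMap.range (π i) := LinearMap.mem_range_self _ _
      rw [hQpt i f', hrange i] at this
      exact (Submodule.mem_prod.mp this).2
    · intro hf
      have : ((0 : h), f) ∈ LinearMap.range (π i) := by
        rw [hrange i]; exact Submodule.mem_prod.mpr ⟨Submodule.zero_mem _, hf⟩
      obtain ⟨z, hz⟩ := this
      refine ⟨z.2, ?_⟩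
      have := congrArg Prod.snd hz
      rwa [hsplit i z] at this
  have hPker : ∀ i, LinearMap.ker (P i) = LinearMap.ker (a i) := by
    intro i
    ext u
    rw [LinearMap.mem_ker]
    constructor
    · intro hu
      have : (u, (0 : Module.Dual ℂ h)) ∈ LinearMap.ker (π i) := by
        rw [LinearMap.mem_ker, hPpt i u, hu]; rfl
      rw [hker i] at this
      exact (Submodule.mem_prod.mp this).1
    · intro hu
      have : (u, (0 : Module.Dual ℂ h)) ∈ LinearMap.ker (π i) := by
        rw [hker i]; exact Submodule.mem_prod.mpr ⟨hu, Submodule.zero_mem _⟩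
      rw [LinearMap.mem_ker, hPpt i u, Prod.ext_iff] at this
      exact this.1
  have hQker : ∀ i, LinearMap.ker (Q i) = LinearMap.ker (b i) := by
    intro i
    ext f
    rw [LinearMap.mem_ker]
    constructor
    · intro hf
      have : ((0 : h), f) ∈ LinearMap.ker (π i) := by
        rw [LinearMap.mem_ker, hQpt i f, hf]; rfl
      rw [hker i] at this
      exact (Submodule.mem_prod.mp this).2
    · intro hf
      have : ((0 : h), f) ∈ LinearMap.ker (π i) := by
        rw [hker i]; exact Submodule.mem_prod.mpr ⟨Submodule.zero_mem _, hf⟩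
      rw [LinearMap.mem_ker, hQpt i f, Prod.ext_iff] at this
      exact this.2
  -- duality: b i is the dual map of a' i, and Q i = (P i).dualMap
  set a' : Fin k → (h →ₗ[ℂ] h) := fun i => LinearMap.id - ρ ((s i)⁻¹) with ha'
  have hbdual : ∀ i, b i = (a' i).dualMap := by
    intro i
    apply LinearMap.ext; intro f
    apply LinearMap.ext; intro u
    simp [hb, ha', Representation.dual_apply, Module.Dual.transpose_apply,
      LinearMap.dualMap_apply, LinearMap.sub_apply, map_sub, LinearMap.comp_apply]
  have hker_a' : ∀ i, LinearMap.ker (a' i) = LinearMap.ker (a i) := by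
    intro i
    ext x
    simp only [LinearMap.mem_ker, ha, ha', LinearMap.sub_apply, LinearMap.id_apply,
      sub_eq_zero]
    constructor
    · intro hx
      exact ((congrArg (ρ (s i)) hx).trans (hinv _ x)).symm
    · intro hx
      exact ((congrArg (ρ (s i)⁻¹) hx).trans (hinv' _ x)).symm
  have hrange_a' : ∀ i, LinearMap.range (a' i) = LinearMap.range (a i) := by
    intro i
    have hmap : Submodule.map (ρ (s i)⁻¹) (LinearMap.range (a i)) = LinearMap.range (a i) := by
      have le1 : Submodule.map (ρ (s i)) (LinearMap.range (a i)) ≤ LinearMap.range (a i) := by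
        rintro _ ⟨_, ⟨x, rfl⟩, rfl⟩
        exact ⟨ρ (s i) x, by simp [ha, map_sub]⟩
      have le2 : Submodule.map (ρ (s i)⁻¹) (LinearMap.range (a i)) ≤ LinearMap.range (a i) := by
        rintro _ ⟨_, ⟨x, rfl⟩, rfl⟩
        refine ⟨ρ (s i)⁻¹ x, ?_⟩
        simp [ha, map_sub, hinv, hinv']
      have hcomp : ∀ N : Submodule ℂ h,
          Submodule.map (ρ (s i)⁻¹) (Submodule.map (ρ (s i)) N) = N := by
        intro N
        ext y
        simp only [Submodule.mem_map]
        constructor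
        · rintro ⟨_, ⟨x, hx, rfl⟩, rfl⟩; rwa [hinv']
        · intro hy; exact ⟨ρ (s i) y, ⟨y, hy, rfl⟩, hinv' _ _⟩
      refine le_antisymm le2 ?_
      conv_lhs => rw [← hcomp (LinearMap.range (a i))]
      exact Submodule.map_mono le1
    have hcompmap : a' i = -((ρ (s i)⁻¹) ∘ₗ a i) := by
      apply LinearMap.ext; intro x
      simp [ha, ha', map_sub, hinv']
    rw [hcompmap, LinearMap.range_neg, LinearMap.range_comp, hmap]
  have hQP : ∀ i, Q i = (P i).dualMap := by
    intro i
    have hdidem : (P i).dualMap ∘ₗ (P i).dualMap = (P i).dualMap := by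
      apply LinearMap.ext; intro f
      apply LinearMap.ext; intro u
      simp only [LinearMap.comp_apply, LinearMap.dualMap_apply]
      rw [← LinearMap.comp_apply (P i) (P i), hPidem i]
    apply proj_unique (hQidem i) hdidem
    · rw [hQrange i, hbdual i, LinearMap.range_dualMap_eq_dualAnnihilator_ker,
        LinearMap.range_dualMap_eq_dualAnnihilator_ker, hker_a', ← hPker i]
    · rw [hQker i, hbdual i, LinearMap.ker_dualMap_eq_dualAnnihilator_range,
        LinearMap.ker_dualMap_eq_dualAnnihilator_range, hrange_a', ← hPrange i]
  -- multiplicativity of σ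
  have hσmul : ∀ g1 g2 : W, σ (g1 * g2) = σ g1 ∘ₗ σ g2 := by
    intro g1 g2
    rw [hσ, hσ, hσ, map_mul, map_mul]
    apply LinearMap.ext; rintro ⟨x1, x2⟩
    simp [Module.End.mul_apply]
  have hσone : σ 1 = LinearMap.id := by
    rw [hσ]
    apply LinearMap.ext; rintro ⟨x1, x2⟩
    simp [Module.Dual.transpose_apply, Module.End.one_eq_id]
  have hσid : ∀ g : W, σ g ∘ₗ σ g⁻¹ = LinearMap.id ∧ σ g⁻¹ ∘ₗ σ g = LinearMap.id := by
    intro g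
    constructor
    · rw [← hσmul, mul_inv_cancel, hσone]
    · rw [← hσmul, inv_mul_cancel, hσone]
  -- conjugation permutes the projections
  have hconjP : ∀ g : W, ∃ e : Equiv.Perm (Fin k),
      ∀ i (u : h), ρ g (P i (ρ g⁻¹ u)) = P (e i) u := by
    intro g
    obtain ⟨e, he⟩ := hconj g
    refine ⟨e, ?_⟩
    have hπconj : ∀ i, σ g ∘ₗ π i ∘ₗ σ g⁻¹ = π (e i) := by
      intro i
      have hFconj : σ g ∘ₗ (LinearMap.id - σ (s i)) ∘ₗ σ g⁻¹
          = LinearMap.id - σ (s (e i)) := by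
        apply LinearMap.ext; intro x
        simp only [LinearMap.comp_apply, LinearMap.sub_apply, LinearMap.id_apply, map_sub]
        congr 1
        · exact LinearMap.ext_iff.mp (hσid g).1 x
        · rw [← he i, hσmul, hσmul]; rfl
      have hcidem : (σ g ∘ₗ π i ∘ₗ σ g⁻¹) ∘ₗ (σ g ∘ₗ π i ∘ₗ σ g⁻¹)
          = σ g ∘ₗ π i ∘ₗ σ g⁻¹ := by
        apply LinearMap.ext; intro x
        simp only [LinearMap.comp_apply]
        rw [show (σ g⁻¹) ((σ g) ((π i) ((σ g⁻¹) x))) = π i (σ g⁻¹ x) from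
          LinearMap.ext_iff.mp (hσid g).2 _]
        rw [show (π i) ((π i) ((σ g⁻¹) x)) = π i (σ g⁻¹ x) from
          LinearMap.ext_iff.mp (hidem i) _]
      apply proj_unique hcidem (hidem (e i))
      · rw [range_conj (hσid g).1 (hσid g).2, (hπ i).2.1,
          ← range_conj (u := σ g) (u' := σ g⁻¹) (f := LinearMap.id - σ (s i))
            (hσid g).1 (hσid g).2, hFconj, ← (hπ (e i)).2.1]
      · rw [ker_conj (hσid g).1 (hσid g).2, (hπ i).2.2,
          ← ker_conj (u := σ g) (u' := σ g⁻¹) (f := LinearMap.id - σ (s i))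
            (hσid g).1 (hσid g).2, hFconj, ← (hπ (e i)).2.2]
    intro i u
    have := LinearMap.ext_iff.mp (hπconj i) (u, 0)
    have hL : (σ g ∘ₗ π i ∘ₗ σ g⁻¹) (u, 0) = (ρ g (P i (ρ g⁻¹ u)), 0) := by
      simp only [LinearMap.comp_apply]
      rw [hσ g⁻¹]
      have : (LinearMap.prodMap (ρ g⁻¹) (ρ.dual g⁻¹)) ((u, 0) : h × (Module.Dual ℂ h))
          = (ρ g⁻¹ u, 0) := by simp
      rw [this, hPpt i, hσ g]
      simp
    rw [hL, hPpt (e i) u, Prod.ext_iff] at this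
    exact this.1
  -- the averaged operator T
  set T : h →ₗ[ℂ] h := ∑ i, P i with hT
  have hTapp : ∀ u, T u = ∑ i, P i u := by
    intro u; rw [hT]; exact LinearMap.sum_apply Finset.univ P u
  have hTcomm : ∀ g : W, ρ g ∘ₗ T = T ∘ₗ ρ g := by
    intro g
    obtain ⟨e, hPe⟩ := hconjP g
    apply LinearMap.ext; intro u
    simp only [LinearMap.comp_apply, hTapp, map_sum]
    have hterm : ∀ i, ρ g (P i u) = P (e i) (ρ g u) := by
      intro i
      have := hPe i (ρ g u)
      rwa [hinv'] at this
    rw [Finset.sum_congr rfl (fun i _ => hterm i)]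
    exact Equiv.sum_comp e (fun j => P j (ρ g u))
  -- Schur's lemma applied to the dual of T
  have hdualcomm : ∀ w : W, T.dualMap ∘ₗ ρ.dual w = ρ.dual w ∘ₗ T.dualMap := by
    intro w
    apply LinearMap.ext; intro f
    apply LinearMap.ext; intro u
    simp only [LinearMap.comp_apply, LinearMap.dualMap_apply,
      Representation.dual_apply, Module.Dual.transpose_apply]
    congr 1
    have h3 := LinearMap.ext_iff.mp (hTcomm w⁻¹) u
    simp only [LinearMap.comp_apply] at h3
    exact h3
  obtain ⟨c, hc⟩ := hSchur T.dualMap hdualcomm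
  have hTc : ∀ u, T u = c • u := by
    intro u
    have hall : ∀ f : Module.Dual ℂ h, f (T u - c • u) = 0 := by
      intro f
      have h1 : T.dualMap f = c • f := by rw [hc]; rfl
      have h2 : f (T u) = c * f u := by
        have := LinearMap.ext_iff.mp h1 u
        simpa [LinearMap.dualMap_apply] using this
      simp [map_sub, h2, map_smul, smul_eq_mul]
    have := (Module.forall_dual_apply_eq_zero_iff ℂ (T u - c • u)).mp hall
    exact sub_eq_zero.mp this
  -- trace computation: c = k / n
  have htrP : ∀ i, LinearMap.trace ℂ h (P i) = 1 := by
    intro i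
    have hproj : LinearMap.IsProj (LinearMap.range (P i)) (P i) :=
      ⟨fun x => LinearMap.mem_range_self _ x, fun x hx => idem_fix (hPidem i) hx⟩
    rw [hproj.trace]
    have h1 : Module.finrank ℂ (LinearMap.ker (a i)) = n - 1 := by
      have hkeq : LinearMap.ker (a i) = LinearMap.ker (ρ (s i) - LinearMap.id) := by
        ext x
        simp only [LinearMap.mem_ker, ha, LinearMap.sub_apply, LinearMap.id_apply,
          sub_eq_zero]
        exact ⟨fun hx => hx.symm, fun hx => hx.symm⟩
      rw [hkeq]; exact hrefl i
    have h2 := LinearMap.finrank_range_add_finrank_ker (a i)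
    rw [hdim, h1] at h2
    have h3 : Module.finrank ℂ (LinearMap.range (a i)) = 1 := by omega
    rw [hPrange i, h3]
    norm_num
  have htrT : LinearMap.trace ℂ h T = (k : ℂ) := by
    rw [hT, map_sum]
    rw [Finset.sum_congr rfl (fun i _ => htrP i)]
    rw [Finset.sum_const, Finset.card_univ, Fintype.card_fin, nsmul_eq_mul, mul_one]
  have hTid : T = c • LinearMap.id := by
    apply LinearMap.ext; intro u
    simp [hTc u]
  have htrT' : LinearMap.trace ℂ h T = c * n := by
    rw [hTid]
    rw [show LinearMap.trace ℂ h (c • LinearMap.id) = c • LinearMap.trace ℂ h LinearMap.id from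
      map_smul _ c _]
    rw [LinearMap.trace_id, hdim, smul_eq_mul]
  have hne : (n : ℂ) ≠ 0 := Nat.cast_ne_zero.mpr hn.ne'
  have hcval : c = (k : ℂ) / n := by
    rw [eq_div_iff hne, ← htrT, htrT']
  -- the scalar simplification
  have hz1 : (1 : ℂ) - ζ ≠ 0 := sub_ne_zero.mpr (Ne.symm hζ1)
  have hz2 : (1 : ℂ) - ζ⁻¹ ≠ 0 := by
    rw [sub_ne_zero]
    intro hcontra
    exact hζ1 (by rw [← inv_inv ζ, ← hcontra, inv_one])
  have hscal : (1 - ζ)⁻¹ * (1 - ζ⁻¹)⁻¹ * (2 - ζ - ζ⁻¹) = 1 := by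
    have h2 : 2 - ζ - ζ⁻¹ = (1 - ζ) * (1 - ζ⁻¹) := by
      field_simp
      ring
    rw [h2, show (1 - ζ)⁻¹ * (1 - ζ⁻¹)⁻¹ * ((1 - ζ) * (1 - ζ⁻¹))
        = ((1 - ζ)⁻¹ * (1 - ζ)) * ((1 - ζ⁻¹)⁻¹ * (1 - ζ⁻¹)) from by ring,
      inv_mul_cancel₀ hz1, inv_mul_cancel₀ hz2, mul_one]
  -- final assembly
  intro x y
  have hterm : ∀ i, ω (π i x) (π i y) = x.2 (P i y.1) - y.2 (P i x.1) := by
    intro i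
    rw [hω, hsplit i x, hsplit i y]
    simp only
    rw [hQP i]
    simp only [LinearMap.dualMap_apply]
    rw [show P i (P i y.1) = P i y.1 from LinearMap.ext_iff.mp (hPidem i) _,
      show P i (P i x.1) = P i x.1 from LinearMap.ext_iff.mp (hPidem i) _]
  rw [Finset.sum_congr rfl (fun i _ => hterm i)]
  rw [Finset.sum_sub_distrib]
  have hx2 : ∑ i, x.2 (P i y.1) = x.2 (T y.1) := by rw [hTapp, map_sum]
  have hy2 : ∑ i, y.2 (P i x.1) = y.2 (T x.1) := by rw [hTapp, map_sum]
  rw [hx2, hy2, hTc (y.1), hTc (x.1), map_smul, map_smul, hω, smul_eq_mul, smul_eq_mul,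
    hcval]
  rw [show ((k : ℂ) / n) * (1 - ζ)⁻¹ * (1 - ζ⁻¹)⁻¹ * (2 - ζ - ζ⁻¹) * (x.2 y.1 - y.2 x.1)
      = ((1 - ζ)⁻¹ * (1 - ζ⁻¹)⁻¹ * (2 - ζ - ζ⁻¹)) * (((k : ℂ) / n) * (x.2 y.1 - y.2 x.1))
      from by ring, hscal]
  ring
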